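/- Let H be a complex Hilbert space and Q ∈ B(H) an idempotent. Then there exists V ∈ B(H) such that VV* = s(Q) and V*V = P_{ran Q}; in particular, the supplementary projection s(Q) and the range projection P_{ran Q} are Murray–von Neumann equivalent in B(H). -/

import Mathlib

/- For an idempotent `Q` on a complex Hilbert space `H`, we define (in `B(H)`):
the orthogonal projection onto the closure of the range of an operator,
the range projection `P_{ran Q} = Q (Q + Q* - 1)⁻¹`,
`|Q*| = (Q Q*)^{1/2}`, its Moore-Penrose inverse
`|Q*|^† = (P_{ran Q} P_{ran Q*} P_{ran Q})^{1/2}`,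
the matched projection `m(Q) = (1/2)(|Q*| + Q*) |Q*|^† (|Q*| + 1)⁻¹ (|Q*| + Q)`,
and the supplementary projection `s(Q) = m(2 P_{ran Q} - Q)`. -/

noncomputable section

namespace QPP

variable {H : Type*} [NormedAddCommGroup H] [InnerProductSpace ℂ H] [CompleteSpace H]

/-- The orthogonal projection onto the closure of the range of `T`, as an element of `B(H)`. -/
def closRangeProj (T : H →L[ℂ] H) : H →L[ℂ] H :=
  letI K := (LinearMap.range (T : H →ₗ[ℂ] H)).topologicalClosure
  haveI : CompleteSpace K :=
    (LinearMap.range (T : H →ₗ[ℂ] H)).isClosed_topologicalClosure.completeSpace_coe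
  K.subtypeL ∘L K.orthogonalProjectionOnto

/-- The range projection `P_{ran Q} = Q (Q + Q* - 1)⁻¹` of an idempotent `Q`.  (For an
idempotent `Q` the operator `Q + Q* - 1` is invertible, so `Ring.inverse` is its inverse.) -/
def rangeProj (Q : H →L[ℂ] H) : H →L[ℂ] H :=
  Q * Ring.inverse (Q + star Q - 1)

/-- `|Q*| = (Q Q*)^{1/2}`. -/
def absStar (Q : H →L[ℂ] H) : H →L[ℂ] H :=
  CFC.sqrt (Q * star Q)

/-- `|Q*|^† = (P_{ran Q} P_{ran Q*} P_{ran Q})^{1/2}`, the Moore-Penrose inverse of `|Q*|`. -/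
def absStarPinv (Q : H →L[ℂ] H) : H →L[ℂ] H :=
  CFC.sqrt (rangeProj Q * rangeProj (star Q) * rangeProj Q)

/-- The matched projection `m(Q) = (1/2)(|Q*| + Q*) |Q*|^† (|Q*| + 1)⁻¹ (|Q*| + Q)`. -/
def matchedProj (Q : H →L[ℂ] H) : H →L[ℂ] H :=
  (2 : ℂ)⁻¹ • ((absStar Q + star Q) * absStarPinv Q * Ring.inverse (absStar Q + 1)
      * (absStar Q + Q))

/-- The supplementary projection `s(Q) = m(2 P_{ran Q} - Q)`. -/
def suppProj (Q : H →L[ℂ] H) : H →L[ℂ] H :=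
  matchedProj (2 * rangeProj Q - Q)

end QPP

set_option linter.unusedSectionVars false
set_option maxHeartbeats 1000000

section Helpers

variable {A : Type*} [CStarAlgebra A] [PartialOrder A] [StarOrderedRing A]

lemma myCommute_cfcHom {a b : A} (ha : IsSelfAdjoint a) (hab : Commute b a)
    (g : C(spectrum ℝ a, ℝ)) : Commute b (cfcHom ha g) := by
  have hc : Continuous (cfcHom ha : C(spectrum ℝ a, ℝ) →⋆ₐ[ℝ] A) := cfcHom_continuous ha
  have hclosed : IsClosed {g : C(spectrum ℝ a, ℝ) | Commute b (cfcHom ha g)} :=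
    isClosed_eq (by continuity) (by continuity)
  induction g using ContinuousMap.induction_on_of_compact with
  | const r =>
    have : (ContinuousMap.const (spectrum ℝ a) r) = algebraMap ℝ C(spectrum ℝ a, ℝ) r := rfl
    rw [this, AlgHomClass.commutes]
    exact Algebra.commute_algebraMap_right r b
  | id => rw [cfcHom_id ha]; exact hab
  | star_id =>
    have : star ((ContinuousMap.id ℝ).restrict (spectrum ℝ a)) =
        (ContinuousMap.id ℝ).restrict (spectrum ℝ a) := by
      ext x; simp
    rw [this, cfcHom_id ha]; exact hab
  | add f g hf hg => rw [map_add]; exact hf.add_right hg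
  | mul f g hf hg => rw [map_mul]; exact hf.mul_right hg
  | frequently f hf =>
    exact hclosed.closure_subset (mem_closure_iff_frequently.mpr hf)

lemma myCommute_cfc {a b : A} (hab : Commute b a) (f : ℝ → ℝ) : Commute b (cfc f a) := by
  refine cfc_cases (fun x => Commute b x) a f (Commute.zero_right b) fun hf ha => ?_
  exact myCommute_cfcHom ha hab _

lemma myCommute_sqrt {a b : A} (ha : 0 ≤ a) (hab : Commute b a) : Commute b (CFC.sqrt a) := by
  rw [CFC.sqrt_eq_cfc, cfc_nnreal_eq_real _ a ha]
  exact myCommute_cfc hab _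

lemma mySelfAdjoint_sqrt {a : A} : IsSelfAdjoint (CFC.sqrt a) :=
  IsSelfAdjoint.of_nonneg (CFC.sqrt_nonneg a)

lemma myMul_nonneg {a b : A} (ha : 0 ≤ a) (hb : 0 ≤ b) (hab : Commute a b) : 0 ≤ a * b := by
  have h1 : Commute b (CFC.sqrt a) := myCommute_sqrt ha hab.symm
  have h2 : a * b = star (CFC.sqrt a) * b * (CFC.sqrt a) := by
    rw [mySelfAdjoint_sqrt.star_eq, mul_assoc, h1.eq, ← mul_assoc,
      CFC.sqrt_mul_sqrt_self a ha]
  rw [h2]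
  exact star_left_conjugate_nonneg hb _

lemma myCommute_inv {M : Type*} [Monoid M] {x d d1 : M} (h : x * d = d * x)
    (h1 : d * d1 = 1) (h2 : d1 * d = 1) : x * d1 = d1 * x := by
  calc x * d1 = ((d1 * d) * x) * d1 := by rw [h2, one_mul]
    _ = (d1 * (x * d)) * d1 := by rw [mul_assoc d1 d x, h]
    _ = d1 * (x * (d * d1)) := by simp only [mul_assoc]
    _ = d1 * x := by rw [h1, mul_one]

end Helpers


variable {H : Type*} [NormedAddCommGroup H] [InnerProductSpace ℂ H] [CompleteSpace H]

/-- For every idempotent `Q`, the supplementary projection `s(Q)` and the range projection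
`P_{ran Q}` are Murray-von Neumann equivalent: there is `V` with `V V* = s(Q)` and
`V* V = P_{ran Q}`. -/
theorem suppProj_mvnEquiv_rangeProj (Q : H →L[ℂ] H) (hQ : IsIdempotentElem Q) :
    ∃ V : H →L[ℂ] H, V * star V = QPP.suppProj Q ∧ star V * V = QPP.rangeProj Q := by
  have hq : Q * Q = Q := hQ
  have hq' : star Q * star Q = star Q := by rw [← star_mul, hq]
  have hq1 : ∀ x : H →L[ℂ] H, Q * (Q * x) = Q * x := fun x => by rw [← mul_assoc, hq]
  have hq'1 : ∀ x : H →L[ℂ] H, star Q * (star Q * x) = star Q * x := fun x => by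
    rw [← mul_assoc, hq']
  set D : H →L[ℂ] H := 1 + (Q - star Q) * star (Q - star Q) with hDdef
  have hD_unit : IsUnit D :=
    CStarAlgebra.isUnit_of_le 1
      (le_add_of_nonneg_right (mul_star_self_nonneg (Q - star Q))) isStrictlyPositive_one
  have hD_nonneg : (0 : H →L[ℂ] H) ≤ D :=
    le_trans zero_le_one (le_add_of_nonneg_right (mul_star_self_nonneg (Q - star Q)))
  have hD_star : star D = D := by
    rw [hDdef]; simp [star_mul]
  have hD_expand : D = 1 + Q * star Q + star Q * Q - Q - star Q := by
    rw [hDdef]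
    simp only [star_sub, star_star, mul_sub, sub_mul, hq, hq']
    abel
  set D1 : H →L[ℂ] H := Ring.inverse D with hD1def
  have hDD1 : D * D1 = 1 := Ring.mul_inverse_cancel D hD_unit
  have hD1D : D1 * D = 1 := Ring.inverse_mul_cancel D hD_unit
  have hD1_star : star D1 = D1 := by
    have h1 : star D1 * D = 1 := by
      rw [← hD_star, ← star_mul, hDD1, star_one]
    calc star D1 = star D1 * (D * D1) := by rw [hDD1, mul_one]
      _ = (star D1 * D) * D1 := by rw [mul_assoc]
      _ = D1 := by rw [h1, one_mul]
  have hD1_nonneg : (0 : H →L[ℂ] H) ≤ D1 := by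
    have := star_left_conjugate_nonneg hD_nonneg D1
    rwa [hD1_star, mul_assoc, hDD1, mul_one] at this
  have hqD : Q * D = D * Q := by
    rw [hD_expand]
    simp only [mul_sub, sub_mul, mul_add, add_mul, mul_one, one_mul, mul_assoc, hq, hq', hq1, hq'1]
    abel
  have hq'D : star Q * D = D * star Q := by
    have := congrArg star hqD
    rw [star_mul, star_mul, hD_star] at this
    exact this.symm
  have hqD1 : Q * D1 = D1 * Q := myCommute_inv hqD hDD1 hD1D
  have hq'D1 : star Q * D1 = D1 * star Q := myCommute_inv hq'D hDD1 hD1D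
  -- N = Q + Q* - 1
  set N : H →L[ℂ] H := Q + star Q - 1 with hNdef
  have hNN : N * N = D := by
    rw [hNdef, hD_expand]
    simp only [mul_sub, sub_mul, mul_add, add_mul, mul_one, one_mul, hq, hq']
    abel
  have hND : N * D = D * N := by
    rw [hNdef]
    simp only [sub_mul, add_mul, mul_sub, mul_add, one_mul, mul_one, hqD, hq'D]
  have hND1 : N * D1 = D1 * N := myCommute_inv hND hDD1 hD1D
  have hND1_left : N * (N * D1) = 1 := by rw [← mul_assoc, hNN, hDD1]
  have hND1_right : (N * D1) * N = 1 := by rw [hND1, mul_assoc, hNN, hD1D]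
  have hNinv : Ring.inverse N = N * D1 :=
    Ring.inverse_unit ⟨N, N * D1, hND1_left, hND1_right⟩
  -- A0 = Q Q*
  set A0 : H →L[ℂ] H := Q * star Q with hA0def
  have hA0_nonneg : (0 : H →L[ℂ] H) ≤ A0 := mul_star_self_nonneg Q
  have hA0_star : star A0 = A0 := by rw [hA0def, star_mul, star_star]
  have hA0D : A0 * D = D * A0 := by
    rw [hA0def, mul_assoc, hq'D, ← mul_assoc, hqD, mul_assoc]
  have hA0D1 : A0 * D1 = D1 * A0 := myCommute_inv hA0D hDD1 hD1D
  have hDA0 : D * A0 = A0 * A0 := by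
    rw [hD_expand, hA0def]
    simp only [mul_sub, sub_mul, mul_add, add_mul, mul_one, one_mul, mul_assoc, hq, hq', hq1, hq'1]
    abel
  -- P = range projection
  set P : H →L[ℂ] H := A0 * D1 with hPdef
  have hD1A0 : D1 * A0 = A0 * D1 := (myCommute_inv hA0D hDD1 hD1D).symm
  have hrange : QPP.rangeProj Q = P := by
    rw [QPP.rangeProj, ← hNdef, hNinv, ← mul_assoc, hPdef]
    congr 1
    rw [hNdef, hA0def]
    simp only [mul_sub, mul_add, mul_one, hq]
    abel
  have hP_star : star P = P := by
    rw [hPdef, star_mul, hD1_star, hA0_star, hD1A0]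
  have hPA0 : P * A0 = A0 := by
    calc P * A0 = A0 * (D1 * A0) := by rw [hPdef, mul_assoc A0 D1 A0]
      _ = (A0 * A0) * D1 := by rw [hD1A0, ← mul_assoc A0 A0 D1]
      _ = (A0 * D) * D1 := by rw [← hDA0, ← hA0D]
      _ = A0 := by rw [mul_assoc A0 D D1, hDD1, mul_one]
  have hPP : P * P = P := by
    nth_rewrite 2 [hPdef]
    rw [← mul_assoc, hPA0, ← hPdef]
  have hPq : P * Q = Q := by
    have h1 : A0 * Q = Q * D := by
      rw [hA0def, hD_expand, hA0def]
      simp only [mul_sub, sub_mul, mul_add, add_mul, mul_one, one_mul, mul_assoc,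
        hq, hq', hq1, hq'1]
      abel
    rw [hPdef, mul_assoc A0 D1 Q, ← hqD1, ← mul_assoc A0 Q D1, h1,
      mul_assoc Q D D1, hDD1, mul_one]
  have hQA0 : Q * A0 = A0 := by rw [hA0def, ← mul_assoc, hq]
  have hqP : Q * P = P := by
    rw [hPdef, ← mul_assoc, hQA0]
  have hq'P : star Q * P = star Q := by
    have := congrArg star hPq
    rwa [star_mul, hP_star] at this
  have hPq' : P * star Q = P := by
    have := congrArg star hqP
    rwa [star_mul, hP_star] at this
  have hPD1 : P * D1 = D1 * P := by
    rw [hPdef, mul_assoc A0 D1 D1, ← mul_assoc D1 A0 D1, hD1A0, mul_assoc A0 D1 D1]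
  -- s = |Q*| = sqrt A0
  set s : H →L[ℂ] H := CFC.sqrt A0 with hsdef
  have hss : s * s = A0 := CFC.sqrt_mul_sqrt_self A0 hA0_nonneg
  have hs_nonneg : (0 : H →L[ℂ] H) ≤ s := CFC.sqrt_nonneg _
  have hs_star : star s = s := by rw [hsdef]; exact mySelfAdjoint_sqrt.star_eq
  have hsD1 : s * D1 = D1 * s := by
    rw [hsdef]
    exact ((myCommute_sqrt hA0_nonneg (hD1A0 : Commute D1 A0)).eq).symm
  have hPs : P * s = s := by
    have h0 : (1 - P) * A0 = 0 := by rw [sub_mul, one_mul, hPA0, sub_self]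
    have h1 : ((1 - P) * s) * star ((1 - P) * s) = 0 := by
      rw [star_mul, hs_star, star_sub, star_one, hP_star,
        mul_assoc (1 - P) s (s * (1 - P)), ← mul_assoc s s (1 - P), hss,
        ← mul_assoc (1 - P) A0 (1 - P), h0, zero_mul]
    have h2 : (1 - P) * s = 0 := by rwa [CStarRing.mul_star_self_eq_zero_iff] at h1
    rw [sub_mul, one_mul] at h2
    exact (sub_eq_zero.mp h2).symm
  have hsP : s * P = s := by
    have := congrArg star hPs
    rwa [star_mul, hs_star, hP_star] at this
  have hqs : Q * s = s := by
    rw [← hPs, ← mul_assoc, hqP]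
  have hsq' : s * star Q = s := by
    have := congrArg star hqs
    rwa [star_mul, hs_star] at this
  -- R = 2P - Q
  set R : H →L[ℂ] H := 2 * P - Q with hRdef
  have hR2 : R = P + P - Q := by rw [hRdef, two_mul]
  have hR_star : star R = P + P - star Q := by
    rw [hR2, star_sub, star_add, hP_star]
  have hRR' : R * star R = A0 := by
    rw [hR_star, hR2, hA0def]
    simp only [mul_sub, sub_mul, mul_add, add_mul, hPP, hPq', hqP]
    abel
  have hAbsR : QPP.absStar R = s := by
    rw [QPP.absStar, hRR']
  -- lifted P-rules
  have hPP1 : ∀ x : H →L[ℂ] H, P * (P * x) = P * x := fun x => by rw [← mul_assoc, hPP]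
  have hPq1 : ∀ x : H →L[ℂ] H, P * (Q * x) = Q * x := fun x => by rw [← mul_assoc, hPq]
  have hPq'1 : ∀ x : H →L[ℂ] H, P * (star Q * x) = P * x := fun x => by rw [← mul_assoc, hPq']
  have hqP1 : ∀ x : H →L[ℂ] H, Q * (P * x) = P * x := fun x => by rw [← mul_assoc, hqP]
  have hq'P1 : ∀ x : H →L[ℂ] H, star Q * (P * x) = star Q * x := fun x => by
    rw [← mul_assoc, hq'P]
  -- M = R + R* - 1
  set M : H →L[ℂ] H := R + star R - 1 with hMdef
  have hM2 : M = P + P + P + P - Q - star Q - 1 := by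
    rw [hMdef, hR_star, hR2]; abel
  have hMM : M * M = D := by
    rw [hM2, hD_expand, hA0def]
    simp only [mul_sub, sub_mul, mul_add, add_mul, mul_one, one_mul,
      hPP, hPq, hPq', hqP, hq'P, hq, hq']
    abel
  have hPD : P * D = D * P := by
    have h1 : P * D = A0 := by rw [hPdef, mul_assoc A0 D1 D, hD1D, mul_one]
    have h2 : D * P = A0 := by
      rw [hPdef, ← mul_assoc D A0 D1, hDA0, ← hDA0, ← hA0D, mul_assoc A0 D D1,
        hDD1, mul_one]
    rw [h1, h2]
  have hMD : M * D = D * M := by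
    rw [hM2]
    simp only [sub_mul, add_mul, mul_sub, mul_add, one_mul, mul_one, hqD, hq'D, hPD]
  have hMD1 : M * D1 = D1 * M := myCommute_inv hMD hDD1 hD1D
  have hMM1_left : M * (M * D1) = 1 := by rw [← mul_assoc, hMM, hDD1]
  have hMM1_right : (M * D1) * M = 1 := by rw [hMD1, mul_assoc, hMM, hD1D]
  have hMinv : Ring.inverse M = M * D1 :=
    Ring.inverse_unit ⟨M, M * D1, hMM1_left, hMM1_right⟩
  have hRM : R * M = A0 := by
    rw [hR2, hM2, hA0def]
    simp only [mul_sub, sub_mul, mul_add, add_mul, mul_one, one_mul,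
      hPP, hPq, hPq', hqP, hq'P, hq, hq']
    abel
  have hprR : QPP.rangeProj R = P := by
    rw [QPP.rangeProj, ← hMdef, hMinv, ← mul_assoc, hRM, ← hPdef]
  have hM' : star R + R - 1 = M := by rw [hMdef]; abel
  have hprR' : QPP.rangeProj (star R) = star R * (M * D1) := by
    rw [QPP.rangeProj, star_star, hM', hMinv]
  have hPB : P * (star R * M) = P + P - Q := by
    rw [hR_star, hM2]
    simp only [mul_sub, sub_mul, mul_add, add_mul, mul_one, one_mul,
      hPP, hPq, hPq', hqP, hq'P, hq, hq', hPP1, hPq1, hPq'1, hqP1, hq'P1]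
    abel
  have hPBP : (P * (star R * M)) * P = P := by
    rw [hPB]
    simp only [sub_mul, add_mul, hPP, hqP]
    abel
  have hprod : QPP.rangeProj R * QPP.rangeProj (star R) * QPP.rangeProj R = P * D1 := by
    rw [hprR, hprR', ← mul_assoc (star R) M D1, ← mul_assoc P (star R * M) D1,
      mul_assoc (P * (star R * M)) D1 P, ← hPD1,
      ← mul_assoc (P * (star R * M)) P D1, hPBP]
  have hT_nonneg : (0 : H →L[ℂ] H) ≤ s * D1 := myMul_nonneg hs_nonneg hD1_nonneg hsD1
  have hTT : (s * D1) * (s * D1) = P * D1 := by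
    rw [mul_assoc s D1 (s * D1), ← mul_assoc D1 s D1, ← hsD1, mul_assoc s D1 D1,
      ← mul_assoc s s (D1 * D1), hss, ← mul_assoc A0 D1 D1, ← hPdef]
  have hT : QPP.absStarPinv R = s * D1 := by
    rw [QPP.absStarPinv, hprod]
    exact CFC.sqrt_unique hTT hT_nonneg
  -- S1 = (s+1)⁻¹
  have hs1_unit : IsUnit (s + 1) :=
    CStarAlgebra.isUnit_of_le 1 (le_add_of_nonneg_left hs_nonneg) isStrictlyPositive_one
  have hs1_nonneg : (0 : H →L[ℂ] H) ≤ s + 1 := add_nonneg hs_nonneg zero_le_one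
  set S1 : H →L[ℂ] H := Ring.inverse (s + 1) with hS1def
  have hs1S1 : (s + 1) * S1 = 1 := Ring.mul_inverse_cancel _ hs1_unit
  have hS1s1 : S1 * (s + 1) = 1 := Ring.inverse_mul_cancel _ hs1_unit
  have hs1_star : star (s + 1) = s + 1 := by rw [star_add, star_one, hs_star]
  have hS1_star : star S1 = S1 := by
    have h1 : star S1 * (s + 1) = 1 := by
      rw [← hs1_star, ← star_mul, hs1S1, star_one]
    calc star S1 = star S1 * ((s + 1) * S1) := by rw [hs1S1, mul_one]
      _ = (star S1 * (s + 1)) * S1 := by rw [mul_assoc]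
      _ = S1 := by rw [h1, one_mul]
  have hS1_nonneg : (0 : H →L[ℂ] H) ≤ S1 := by
    have := star_left_conjugate_nonneg hs1_nonneg S1
    rwa [hS1_star, mul_assoc, hs1S1, mul_one] at this
  have hsS1 : s * S1 = S1 * s :=
    myCommute_inv (by rw [mul_add, add_mul, mul_one, one_mul]) hs1S1 hS1s1
  have hD1s1 : D1 * (s + 1) = (s + 1) * D1 := by
    rw [mul_add, add_mul, mul_one, one_mul, hsD1]
  have hD1S1 : D1 * S1 = S1 * D1 := myCommute_inv hD1s1 hs1S1 hS1s1
  -- E and F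
  set E : H →L[ℂ] H := (s * D1) * S1 with hEdef
  have hE_nonneg : (0 : H →L[ℂ] H) ≤ E :=
    myMul_nonneg hT_nonneg hS1_nonneg (Commute.mul_left hsS1 hD1S1)
  set F : H →L[ℂ] H := CFC.sqrt E with hFdef
  have hFF : F * F = E := CFC.sqrt_mul_sqrt_self E hE_nonneg
  have hF_star : star F = F := by rw [hFdef]; exact mySelfAdjoint_sqrt.star_eq
  have hsE : s * E = E * s := by
    rw [hEdef]
    exact (((Commute.refl s).mul_right (hsD1 : Commute s D1)).mul_right
      (hsS1 : Commute s S1))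
  have hsF : s * F = F * s := by
    rw [hFdef]
    exact (myCommute_sqrt hE_nonneg (hsE : Commute s E)).symm.eq.symm
  -- the supplementary projection in concrete form
  have hsupp : QPP.suppProj Q =
      (2 : ℂ)⁻¹ • ((s + star R) * (s * D1) * S1 * (s + R)) := by
    rw [QPP.suppProj, hrange, ← hRdef, QPP.matchedProj, hAbsR, hT, ← hS1def]
  -- the isometry V
  have hcstar : star ((((Real.sqrt 2)⁻¹ : ℝ) : ℂ)) = (((Real.sqrt 2)⁻¹ : ℝ) : ℂ) := by
    simp [Complex.star_def, Complex.conj_ofReal]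
  have hcc : ((((Real.sqrt 2)⁻¹ : ℝ) : ℂ)) * ((((Real.sqrt 2)⁻¹ : ℝ) : ℂ)) = (2 : ℂ)⁻¹ := by
    rw [← Complex.ofReal_mul, ← mul_inv, Real.mul_self_sqrt (by norm_num : (0:ℝ) ≤ 2)]
    norm_num
  refine ⟨(((Real.sqrt 2)⁻¹ : ℝ) : ℂ) • ((s + star R) * F), ?_, ?_⟩
  · -- V V* = s(Q)
    have hXstar : star ((s + star R) * F) = F * (s + R) := by
      rw [star_mul, hF_star, star_add, hs_star, star_star]
    rw [star_smul, hcstar, hXstar, smul_mul_assoc, mul_smul_comm, smul_smul, hcc, hsupp]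
    congr 1
    calc ((s + star R) * F) * (F * (s + R))
        = (s + star R) * ((F * F) * (s + R)) := by
          rw [mul_assoc (s + star R) F (F * (s + R)), ← mul_assoc F F (s + R)]
      _ = (s + star R) * (((s * D1) * S1) * (s + R)) := by rw [hFF, hEdef]
      _ = (s + star R) * (s * D1) * S1 * (s + R) := by
          rw [← mul_assoc (s + star R) ((s * D1) * S1) (s + R),
            ← mul_assoc (s + star R) (s * D1) S1]
  · -- V* V = P
    have hXstar : star ((s + star R) * F) = F * (s + R) := by
      rw [star_mul, hF_star, star_add, hs_star, star_star]
    rw [star_smul, hcstar, hXstar, smul_mul_assoc, mul_smul_comm, smul_smul, hcc, hrange]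
    -- inner product expansion
    have hsR' : s * star R = s := by
      rw [hR_star]
      simp only [mul_sub, mul_add, hsP, hsq']
      abel
    have hRs : R * s = s := by
      rw [hR2]
      simp only [sub_mul, add_mul, hPs, hqs]
      abel
    have hsum : (s + R) * (s + star R) = (A0 + s) + (A0 + s) := by
      simp only [mul_add, add_mul, hss, hsR', hRs, hRR']
      abel
    have hA0F : A0 * F = F * A0 := by
      calc A0 * F = s * (s * F) := by rw [← hss, mul_assoc]
        _ = s * (F * s) := by rw [hsF]
        _ = (s * F) * s := by rw [← mul_assoc s F s]
        _ = (F * s) * s := by rw [hsF]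
        _ = F * (s * s) := by rw [mul_assoc F s s]
        _ = F * A0 := by rw [hss]
    have hZ : F * ((A0 + s) * F) = P := by
      have h1 : (A0 + s) * F = F * (A0 + s) := by rw [add_mul, mul_add, hA0F, hsF]
      have hA0s : A0 + s = s * (s + 1) := by rw [mul_add, mul_one, hss]
      rw [h1, ← mul_assoc, hFF, hEdef, hA0s]
      calc ((s * D1) * S1) * (s * (s + 1))
          = (s * D1) * ((S1 * s) * (s + 1)) := by
            rw [mul_assoc (s * D1) S1 (s * (s + 1)), ← mul_assoc S1 s (s + 1)]
        _ = (s * D1) * (s * (S1 * (s + 1))) := by rw [← hsS1, mul_assoc s S1 (s + 1)]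
        _ = (s * D1) * s := by rw [hS1s1, mul_one]
        _ = s * (s * D1) := by rw [mul_assoc s D1 s, ← hsD1]
        _ = (s * s) * D1 := by rw [← mul_assoc]
        _ = P := by rw [hss, ← hPdef]
    have hinner : (F * (s + R)) * ((s + star R) * F) = (2 : ℂ) • (F * ((A0 + s) * F)) :=
      calc (F * (s + R)) * ((s + star R) * F)
          = F * (((s + R) * (s + star R)) * F) := by
            rw [mul_assoc F (s + R) ((s + star R) * F), ← mul_assoc (s + R) (s + star R) F]
        _ = F * ((A0 + s) * F) + F * ((A0 + s) * F) := by rw [hsum, add_mul, mul_add]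
        _ = (2 : ℂ) • (F * ((A0 + s) * F)) := (two_smul ℂ _).symm
    rw [hinner, smul_smul, show ((2:ℂ)⁻¹ * 2) = 1 by norm_num, one_smul]
    exact hZ


end
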